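/- Let H be a real Hilbert space, F ⊆ H a finite-dimensional subspace, and φ : F → H a linear map such that ‖φ(e) − e‖ ≤ ε ‖e‖ for all e ∈ F, where 0 ≤ ε < 1. Then F intersects the orthogonal complement of φ(F) trivially, and in fact H is the (internal) direct sum of F and the orthogonal complement of φ(F); that is, F and (φ(F))ᗮ are complementary subspaces of H. -/

import Mathlib

/-- If `F` is a finite-dimensional subspace of a real Hilbert space
`H` and `φ : F → H` is a linear map with `‖φ e − e‖ ≤ ε ‖e‖` for all `e ∈ F`, where
`0 ≤ ε < 1`, then `F` meets the orthogonal complement of `φ(F)` trivially, and in fact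
`F` and `(φ(F))ᗮ` are complementary subspaces of `H`. -/
theorem perturbed_subspace_complement
    {H : Type*} [NormedAddCommGroup H] [InnerProductSpace ℝ H] [CompleteSpace H]
    (F : Submodule ℝ H) [FiniteDimensional ℝ F]
    (φ : F →ₗ[ℝ] H)
    (ε : ℝ) (hε0 : 0 ≤ ε) (hε1 : ε < 1)
    (hφ : ∀ e : F, ‖φ e - (e : H)‖ ≤ ε * ‖(e : H)‖) :
    F ⊓ (LinearMap.range φ)ᗮ = ⊥ ∧ IsCompl F (LinearMap.range φ)ᗮ := by
  set K : Submodule ℝ H := LinearMap.range φ with hK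
  haveI : FiniteDimensional ℝ K := by
    exact Module.Finite.range φ
  -- key fact: any e ∈ F with φ e ⟂ e is zero
  have key : ∀ e : F, inner ℝ (φ e) (e : H) = (0 : ℝ) → e = 0 := by
    intro e h0
    have h1 : ‖(e : H)‖ ^ 2 = inner ℝ ((e : H) - φ e) (e : H) := by
      rw [inner_sub_left, h0, real_inner_self_eq_norm_sq]; ring
    have h2 : inner ℝ ((e : H) - φ e) (e : H) ≤ ‖(e : H) - φ e‖ * ‖(e : H)‖ :=
      real_inner_le_norm _ _
    have h3 : ‖(e : H) - φ e‖ ≤ ε * ‖(e : H)‖ := by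
      rw [norm_sub_rev]; exact hφ e
    have h4 : ‖(e : H)‖ ^ 2 ≤ ε * ‖(e : H)‖ * ‖(e : H)‖ := by
      calc ‖(e : H)‖ ^ 2 = inner ℝ ((e : H) - φ e) (e : H) := h1
        _ ≤ ‖(e : H) - φ e‖ * ‖(e : H)‖ := h2
        _ ≤ ε * ‖(e : H)‖ * ‖(e : H)‖ := by
            exact mul_le_mul_of_nonneg_right h3 (norm_nonneg _)
    have hn : ‖(e : H)‖ = 0 := by
      by_contra hne
      have hpos : 0 < ‖(e : H)‖ := lt_of_le_of_ne (norm_nonneg _) (Ne.symm hne)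
      rw [pow_two] at h4
      nlinarith [mul_pos hpos hpos]
    have : (e : H) = 0 := norm_eq_zero.mp hn
    exact Subtype.ext this
  have hdisj : F ⊓ Kᗮ = ⊥ := by
    rw [Submodule.eq_bot_iff]
    rintro x ⟨hxF, hxK⟩
    set e : F := ⟨x, hxF⟩ with he
    have h0 : inner ℝ (φ e) (x : H) = (0 : ℝ) :=
      hxK _ (LinearMap.mem_range_self φ e)
    have := key e h0
    simpa [he, Subtype.ext_iff] using this
  refine ⟨hdisj, ⟨disjoint_iff.mpr hdisj, ?_⟩⟩
  -- codisjoint: F ⊔ Kᗮ = ⊤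
  -- consider L : F → K, projection restricted to F
  set L : F →ₗ[ℝ] K := K.orthogonalProjectionOnto.toLinearMap.comp F.subtype with hL
  have hLinj : Function.Injective L := by
    rw [← LinearMap.ker_eq_bot, Submodule.eq_bot_iff]
    intro e heL
    have hmem : (e : H) ∈ Kᗮ := by
      have : K.orthogonalProjectionOnto (e : H) = 0 := heL
      exact Submodule.orthogonalProjectionOnto_eq_zero_iff.mp this
    have : (e : H) ∈ F ⊓ Kᗮ := ⟨e.2, hmem⟩
    rw [hdisj] at this
    exact Subtype.ext this
  have hrank : Module.finrank ℝ F = Module.finrank ℝ K := by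
    have h1 : Module.finrank ℝ K ≤ Module.finrank ℝ F := LinearMap.finrank_range_le φ
    have h2 : Module.finrank ℝ F ≤ Module.finrank ℝ K :=
      LinearMap.finrank_le_finrank_of_injective hLinj
    omega
  have hLsurj : Function.Surjective L :=
    (LinearMap.injective_iff_surjective_of_finrank_eq_finrank hrank).mp hLinj
  rw [codisjoint_iff, Submodule.eq_top_iff']
  intro h
  obtain ⟨f, hf⟩ := hLsurj (K.orthogonalProjectionOnto h)
  refine Submodule.mem_sup.mpr ⟨f, f.2, h - f, ?_, by abel⟩
  rw [← Submodule.orthogonalProjectionOnto_eq_zero_iff]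
  have : K.orthogonalProjectionOnto (f : H) = K.orthogonalProjectionOnto h := hf
  rw [map_sub, this, sub_self]
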